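/- Let {M_i}_{i=1}^m be an observable on a finite-dimensional complex Hilbert space H and H₀ a subspace of H. Then H₀ is indistinguishable for {M_i} if and only if there exists an orthonormal basis {φ_k} of H₀ such that ⟨φ_k, M_i φ_j⟩ = 0 and ⟨φ_k, M_i φ_k⟩ = ⟨φ_j, M_i φ_j⟩ for all i and all k ≠ j. -/

import Mathlib

/-- A state on H whose range lies in a subspace H₀: a positive operator of trace one. -/
def IsStateSupportedIn {H : Type*} [NormedAddCommGroup H] [InnerProductSpace ℂ H]
    [CompleteSpace H] (H₀ : Submodule ℂ H) (ρ : H →L[ℂ] H) : Prop :=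
  ρ.IsPositive ∧ LinearMap.trace ℂ H ↑ρ = 1 ∧ LinearMap.range (ρ : H →ₗ[ℂ] H) ≤ H₀

/-- H₀ is indistinguishable for the observable {M_i}: all states supported in H₀
give the same outcome probabilities Tr(M_i ρ). -/
def Indistinguishable {H : Type*} [NormedAddCommGroup H] [InnerProductSpace ℂ H]
    [CompleteSpace H] {m : ℕ} (M : Fin m → H →L[ℂ] H) (H₀ : Submodule ℂ H) : Prop :=
  ∀ i, ∀ ρ₁ ρ₂ : H →L[ℂ] H,
    IsStateSupportedIn H₀ ρ₁ → IsStateSupportedIn H₀ ρ₂ →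
    LinearMap.trace ℂ H ((M i : H →ₗ[ℂ] H) ∘ₗ (ρ₁ : H →ₗ[ℂ] H)) =
      LinearMap.trace ℂ H ((M i : H →ₗ[ℂ] H) ∘ₗ (ρ₂ : H →ₗ[ℂ] H))

open scoped InnerProductSpace ComplexConjugate

/-- Rank-one operator `x ↦ ⟪u, x⟫ • v`. -/
noncomputable def rankOne' {H : Type*} [NormedAddCommGroup H] [InnerProductSpace ℂ H]
    (u v : H) : H →L[ℂ] H := (innerSL ℂ u).smulRight v

section Helpers

variable {H : Type*} [NormedAddCommGroup H] [InnerProductSpace ℂ H] [FiniteDimensional ℂ H]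

lemma trace_eq_sum_inner' {ι : Type*} [Fintype ι] [DecidableEq ι]
    (b : OrthonormalBasis ι ℂ H) (f : H →ₗ[ℂ] H) :
    LinearMap.trace ℂ H f = ∑ i, ⟪b i, f (b i)⟫_ℂ := by
  rw [LinearMap.trace_eq_matrix_trace ℂ b.toBasis, Matrix.trace]
  congr 1
  ext i
  simp [Matrix.diag, LinearMap.toMatrix_apply, b.coe_toBasis_repr_apply,
    b.repr_apply_apply]

lemma trace_comp_rankOne' (f : H →L[ℂ] H) (u v : H) :
    LinearMap.trace ℂ H ((f : H →ₗ[ℂ] H) ∘ₗ (rankOne' u v : H →ₗ[ℂ] H)) = ⟪u, f v⟫_ℂ := by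
  classical
  rw [trace_eq_sum_inner' (stdOrthonormalBasis ℂ H)]
  simp only [LinearMap.comp_apply, ContinuousLinearMap.coe_coe, rankOne',
    ContinuousLinearMap.smulRight_apply, innerSL_apply_apply, map_smul, inner_smul_right]
  exact (stdOrthonormalBasis ℂ H).sum_inner_mul_inner u (f v)

lemma trace_rankOne' (u v : H) :
    LinearMap.trace ℂ H (rankOne' u v : H →ₗ[ℂ] H) = ⟪u, v⟫_ℂ := by
  have := trace_comp_rankOne' (ContinuousLinearMap.id ℂ H) u v
  simpa using this

lemma rankOne'_selfAdjoint (u : H) : IsSelfAdjoint (rankOne' u u) := by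
  rw [ContinuousLinearMap.isSelfAdjoint_iff_isSymmetric]
  intro x y
  simp only [ContinuousLinearMap.coe_coe, rankOne', ContinuousLinearMap.smulRight_apply,
    innerSL_apply_apply, inner_smul_left, inner_smul_right, inner_conj_symm]
  ring

lemma rankOne'_isPositive (u : H) : (rankOne' u u).IsPositive := by
  refine ⟨ContinuousLinearMap.isSelfAdjoint_iff_isSymmetric.mp (rankOne'_selfAdjoint u), fun x => ?_⟩
  rw [ContinuousLinearMap.reApplyInnerSelf_apply]
  have h : rankOne' u u x = ⟪u, x⟫_ℂ • u := rfl
  rw [h, inner_smul_left]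
  rw [mul_comm, Complex.mul_conj]
  simpa using Complex.normSq_nonneg ⟪u, x⟫_ℂ

lemma pure_state_supported (H₀ : Submodule ℂ H) (φ : H₀) (hφ : ‖φ‖ = 1) :
    IsStateSupportedIn H₀ (rankOne' (φ : H) (φ : H)) := by
  refine ⟨rankOne'_isPositive _, ?_, ?_⟩
  · rw [trace_rankOne', inner_self_eq_norm_sq_to_K]
    have h : ‖(φ : H)‖ = ‖φ‖ := rfl
    rw [h, hφ]
    norm_num
  · rintro y ⟨x, rfl⟩
    exact H₀.smul_mem _ φ.2

end Helpers

/-- A subspace H₀ is indistinguishable for an observable {M_i} iff there is an orthonormal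
basis {φ_k} of H₀ with ⟨φ_k, M_i φ_j⟩ = 0 and ⟨φ_k, M_i φ_k⟩ = ⟨φ_j, M_i φ_j⟩ for all i
and all k ≠ j. -/
theorem indistinguishable_iff_exists_orthonormalBasis
    {H : Type*} [NormedAddCommGroup H] [InnerProductSpace ℂ H] [FiniteDimensional ℂ H]
    {m : ℕ} (M : Fin m → H →L[ℂ] H)
    (hpos : ∀ i, (M i).IsPositive) (hsum : ∑ i, M i = 1)
    (H₀ : Submodule ℂ H) :
    Indistinguishable M H₀ ↔
      ∃ b : OrthonormalBasis (Fin (Module.finrank ℂ H₀)) ℂ H₀,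
        ∀ i, ∀ k j, k ≠ j →
          (inner ℂ ((b k : H)) (M i (b j : H)) : ℂ) = 0 ∧
          (inner ℂ ((b k : H)) (M i (b k : H)) : ℂ) =
            (inner ℂ ((b j : H)) (M i (b j : H)) : ℂ) := by
  constructor
  · -- forward direction
    intro hInd
    refine ⟨stdOrthonormalBasis ℂ H₀, ?_⟩
    set b := stdOrthonormalBasis ℂ H₀ with hbdef
    have key : ∀ i, ∀ φ ψ : H₀, ‖φ‖ = 1 → ‖ψ‖ = 1 →
        ⟪(φ : H), M i (φ : H)⟫_ℂ = ⟪(ψ : H), M i (ψ : H)⟫_ℂ := by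
      intro i φ ψ hφ hψ
      have h := hInd i _ _ (pure_state_supported H₀ φ hφ) (pure_state_supported H₀ ψ hψ)
      rwa [trace_comp_rankOne', trace_comp_rankOne'] at h
    intro i k j hkj
    have hbk : ‖b k‖ = 1 := b.orthonormal.1 k
    have hbj : ‖b j‖ = 1 := b.orthonormal.1 j
    set c : ℂ := ⟪(b k : H), M i (b k : H)⟫_ℂ with hc
    have hquad : ∀ x : H₀, ⟪(x : H), M i (x : H)⟫_ℂ = c * ⟪x, x⟫_ℂ := by
      intro x
      rcases eq_or_ne x 0 with rfl | hx
      · simp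
      · have hn : ‖x‖ ≠ 0 := norm_ne_zero_iff.mpr hx
        set u : H₀ := ((‖x‖ : ℂ)⁻¹) • x with hu
        have hnu : ‖u‖ = 1 := by
          rw [hu, norm_smul]
          simp only [norm_inv, Complex.norm_real, Real.norm_eq_abs, abs_norm]
          exact inv_mul_cancel₀ hn
        have h1 := key i u (b k) hnu hbk
        rw [← hc] at h1
        have hcoe : (u : H) = ((‖x‖ : ℂ)⁻¹) • (x : H) := rfl
        rw [hcoe, inner_smul_left, map_smul, inner_smul_right] at h1
        have hconj : (starRingEnd ℂ) ((‖x‖ : ℂ)⁻¹) = (‖x‖ : ℂ)⁻¹ := by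
          simp
        rw [hconj] at h1
        have hinner : ⟪x, x⟫_ℂ = ((‖x‖ : ℂ)) ^ 2 := by
          rw [Submodule.coe_inner]
          exact inner_self_eq_norm_sq_to_K (𝕜 := ℂ) (x : H)
        have hxne : (‖x‖ : ℂ) ≠ 0 := by exact_mod_cast hn
        field_simp [hxne] at h1
        rw [hinner]
        linear_combination h1
    have hsym : ∀ x : H₀, ⟪M i (x : H), (x : H)⟫_ℂ = (starRingEnd ℂ) c * ⟪x, x⟫_ℂ := by
      intro x
      rw [← inner_conj_symm, hquad, map_mul, inner_self_conj]
    set S : H₀ →ₗ[ℂ] H₀ :=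
      ((H₀.orthogonalProjectionOnto : H →L[ℂ] H₀) : H →ₗ[ℂ] H₀) ∘ₗ
        (((M i) : H →ₗ[ℂ] H) ∘ₗ H₀.subtype) with hS
    set T : H₀ →ₗ[ℂ] H₀ := S - c • LinearMap.id with hT
    have hT0 : T = 0 := by
      rw [← inner_map_self_eq_zero]
      intro x
      rw [hT]
      simp only [LinearMap.sub_apply, LinearMap.smul_apply, LinearMap.id_apply,
        inner_sub_left, inner_smul_left, hS, LinearMap.comp_apply,
        Submodule.subtype_apply, ContinuousLinearMap.coe_coe]
      rw [Submodule.inner_orthogonalProjectionOnto_eq_of_mem_right (K := H₀) x (M i (x : H))]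
      rw [hsym x]
      ring
    have hSx : ∀ x : H₀, S x = c • x := by
      intro x
      have h := LinearMap.ext_iff.mp hT0 x
      rw [hT] at h
      simpa [sub_eq_zero] using h
    constructor
    · have h1 : ⟪(b k : H), M i (b j : H)⟫_ℂ = ⟪b k, S (b j)⟫_ℂ := by
        rw [hS]
        simp only [LinearMap.comp_apply, Submodule.subtype_apply, ContinuousLinearMap.coe_coe]
        rw [Submodule.inner_orthogonalProjectionOnto_eq_of_mem_left]
      rw [show (inner ℂ ((b k : H)) (M i (b j : H)) : ℂ) = ⟪(b k : H), M i (b j : H)⟫_ℂ from rfl,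
        h1, hSx, inner_smul_right, b.orthonormal.2 hkj, mul_zero]
    · exact key i (b k) (b j) hbk hbj
  · -- backward direction
    rintro ⟨b, hb⟩
    intro i ρ₁ ρ₂ h₁ h₂
    rcases Nat.eq_zero_or_pos (Module.finrank ℂ H₀) with hn | hn
    · exfalso
      have hbot : H₀ = ⊥ := Submodule.finrank_eq_zero.mp hn
      have hz : (ρ₁ : H →ₗ[ℂ] H) = 0 := by
        rw [← LinearMap.range_le_bot_iff, ← hbot]
        exact h₁.2.2
      have ht := h₁.2.1
      rw [hz] at ht
      simp at ht
    · set k0 : Fin (Module.finrank ℂ H₀) := ⟨0, hn⟩ with hk0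
      set c : ℂ := ⟪(b k0 : H), M i (b k0 : H)⟫_ℂ with hc
      have hdiag : ∀ k, ⟪(b k : H), M i (b k : H)⟫_ℂ = c := by
        intro k
        rcases eq_or_ne k k0 with rfl | hk
        · rfl
        · exact (hb i k k0 hk).2
      have hoff : ∀ k j, k ≠ j → ⟪(b k : H), M i (b j : H)⟫_ℂ = 0 :=
        fun k j h => (hb i k j h).1
      have key2 : ∀ u v : H₀, ⟪(u : H), M i (v : H)⟫_ℂ = c * ⟪u, v⟫_ℂ := by
        have hScal : ∀ v : H₀, (H₀.orthogonalProjectionOnto (M i (v : H))) = c • v := by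
          intro v
          apply b.repr.injective
          ext k
          rw [b.repr_apply_apply, b.repr_apply_apply]
          rw [Submodule.inner_orthogonalProjectionOnto_eq_of_mem_left]
          rw [inner_smul_right]
          conv_lhs => rw [show ((v : H)) = ((∑ l, ⟪b l, v⟫_ℂ • b l : H₀) : H) by
            rw [b.sum_repr' v]]
          rw [Submodule.coe_sum]
          simp only [Submodule.coe_smul, map_sum, map_smul, inner_sum, inner_smul_right]
          rw [Finset.sum_eq_single k]
          · rw [hdiag k, Submodule.coe_inner, mul_comm]
          · intro l _ hl
            rw [hoff k l (Ne.symm hl), mul_zero]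
          · intro h
            exact absurd (Finset.mem_univ k) h
        intro u v
        calc ⟪(u : H), M i (v : H)⟫_ℂ
            = ⟪u, H₀.orthogonalProjectionOnto (M i (v : H))⟫_ℂ :=
              (Submodule.inner_orthogonalProjectionOnto_eq_of_mem_left (K := H₀) u (M i (v : H))).symm
          _ = ⟪u, c • v⟫_ℂ := by rw [hScal v]
          _ = c * ⟪u, v⟫_ℂ := inner_smul_right _ _ _
      set P : H →L[ℂ] H := H₀.subtypeL ∘L (H₀.orthogonalProjectionOnto : H →L[ℂ] H₀) with hP
      have hPmem : ∀ x : H, P x ∈ H₀ := fun x => (H₀.orthogonalProjectionOnto x).2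
      have hPfix : ∀ x ∈ H₀, P x = x := by
        intro x hx
        show ((H₀.orthogonalProjectionOnto x : H₀) : H) = x
        rw [show x = ((⟨x, hx⟩ : H₀) : H) from rfl, Submodule.orthogonalProjectionOnto_mem_subspace_eq_self]
      have hPsa : IsSelfAdjoint P := isSelfAdjoint_starProjection H₀
      have hPsym : ∀ x y : H, ⟪P x, y⟫_ℂ = ⟪x, P y⟫_ℂ :=
        ContinuousLinearMap.isSelfAdjoint_iff_isSymmetric.mp hPsa
      have hPMP : P ∘L (M i) ∘L P = c • P := by
        ext x
        apply ext_inner_left ℂ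
        intro v
        simp only [ContinuousLinearMap.comp_apply, ContinuousLinearMap.smul_apply,
          inner_smul_right]
        calc ⟪v, P (M i (P x))⟫_ℂ
            = ⟪P v, M i (P x)⟫_ℂ := (hPsym v _).symm
          _ = c * ⟪(H₀.orthogonalProjectionOnto v : H₀), (H₀.orthogonalProjectionOnto x : H₀)⟫_ℂ :=
              key2 _ _
          _ = c * ⟪P v, P x⟫_ℂ := by rw [Submodule.coe_inner]; rfl
          _ = c * ⟪v, P (P x)⟫_ℂ := by rw [hPsym]
          _ = c * ⟪v, P x⟫_ℂ := by rw [hPfix (P x) (hPmem x)]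
      have claim : ∀ ρ : H →L[ℂ] H, IsStateSupportedIn H₀ ρ →
          LinearMap.trace ℂ H ((M i : H →ₗ[ℂ] H) ∘ₗ (ρ : H →ₗ[ℂ] H)) = c := by
        intro ρ hρ
        have h1 : P ∘L ρ = ρ := by
          ext x
          exact hPfix (ρ x) (hρ.2.2 ⟨x, rfl⟩)
        have h2 : ρ ∘L P = ρ := by
          have hst := congrArg star (show P * ρ = ρ from h1)
          rw [star_mul, hPsa.star_eq, hρ.1.isSelfAdjoint.star_eq] at hst
          exact hst
        set Ml : H →ₗ[ℂ] H := (M i : H →ₗ[ℂ] H) with hMl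
        set Pl : H →ₗ[ℂ] H := (P : H →ₗ[ℂ] H) with hPl
        set ρl : H →ₗ[ℂ] H := (ρ : H →ₗ[ℂ] H) with hρl
        have h1l : Pl * ρl = ρl := by
          have h := congrArg ContinuousLinearMap.toLinearMap h1
          rwa [ContinuousLinearMap.toLinearMap_comp] at h
        have h2l : ρl * Pl = ρl := by
          have h := congrArg ContinuousLinearMap.toLinearMap h2
          rwa [ContinuousLinearMap.toLinearMap_comp] at h
        have hPMPl : Pl * Ml * Pl = c • Pl := by
          ext x
          have h := ContinuousLinearMap.ext_iff.mp hPMP x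
          exact (by simpa using h : P (M i (P x)) = c • P x)
        calc LinearMap.trace ℂ H (Ml ∘ₗ ρl)
            = LinearMap.trace ℂ H (Ml * (Pl * ρl * Pl)) := by
              rw [h1l, h2l]; rfl
          _ = LinearMap.trace ℂ H ((Ml * (Pl * ρl)) * Pl) := by rw [mul_assoc Ml (Pl * ρl) Pl]
          _ = LinearMap.trace ℂ H (Pl * (Ml * (Pl * ρl))) :=
              LinearMap.trace_mul_comm ℂ _ _
          _ = LinearMap.trace ℂ H ((Pl * Ml * Pl) * ρl) := by
              simp only [mul_assoc]
          _ = LinearMap.trace ℂ H ((c • Pl) * ρl) := by rw [hPMPl]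
          _ = c * LinearMap.trace ℂ H ρl := by
              rw [smul_mul_assoc, h1l, map_smul, smul_eq_mul]
          _ = c := by rw [hρ.2.1, mul_one]
      rw [claim ρ₁ h₁, claim ρ₂ h₂]
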